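/- arXiv:1407.4787 — 4 statements merged into one kernel-verified Lean document; each statement's English description precedes it below -/
import Mathlib

section
/- If φ solves the pendulum equation with φ(t*) = π/2 and φ'(t*) ≤ 0 at some t* > t₀, and φ(t) ∈ [−π/2, π/2] on [t₀, t*], then in fact either φ'(t*) < 0, in which case φ(t) < π/2 on some interval (t* − δ, t*), or φ'(t*) = 0, in which case φ(t) > π/2 for t slightly less than t* — contradicting the invariance; hence a solution entering the strip from the interior can only exit through the set {φ = π/2, φ' > 0} ∪ {φ = −π/2, φ' < 0}. -/
open Real

lemma aux_exit (g l : ℝ) (hg : 0 < g) (hl : 0 < l)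
    (f φ : ℝ → ℝ) (hφ : ContDiff ℝ 2 φ)
    (hode : ∀ t, deriv (deriv φ) t =
      (g / l) * Real.sin (φ t) - (deriv (deriv f) t / l) * Real.cos (φ t))
    (t₀ ts : ℝ) (hts : t₀ < ts)
    (hval : φ ts = π / 2)
    (hmax : ∀ t ∈ Set.Ico t₀ ts, φ t < π / 2) : 0 < deriv φ ts := by
  have h2 : ContDiff ℝ ((1 : ℕ∞) + 1) φ := by exact_mod_cast hφ
  have hd1 : Differentiable ℝ φ := h2.differentiable (by norm_num)
  have hc1 : ContDiff ℝ 1 (deriv φ) := ((contDiff_succ_iff_deriv.mp h2).2).2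
  have hd2 : Differentiable ℝ (deriv φ) := hc1.differentiable one_ne_zero
  have hc2 : Continuous (deriv (deriv φ)) := hc1.continuous_deriv le_rfl
  -- step 1 : 0 ≤ deriv φ ts
  have hle : 0 ≤ deriv φ ts := by
    have hder : HasDerivWithinAt φ (deriv φ ts) (Set.Iio ts) ts :=
      (hd1 ts).hasDerivAt.hasDerivWithinAt
    have htend := hasDerivWithinAt_iff_tendsto_slope.mp hder
    have he : Set.Iio ts \ {ts} = Set.Iio ts := by
      ext x; simp [lt_iff_le_and_ne]
    rw [he] at htend
    refine ge_of_tendsto htend ?_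
    have hmem : Set.Ioo t₀ ts ∈ nhdsWithin ts (Set.Iio ts) := by
      have := inter_mem_nhdsWithin (Set.Iio ts) (Ioi_mem_nhds hts)
      refine Filter.mem_of_superset this ?_
      intro x hx; exact ⟨hx.2, hx.1⟩
    filter_upwards [hmem] with t ht
    have h1 : φ t - φ ts < 0 := by
      have := hmax t ⟨le_of_lt ht.1, ht.2⟩
      rw [hval]; linarith
    have h3 : t - ts < 0 := sub_neg.mpr ht.2
    have : 0 < slope φ ts t := by
      rw [slope_def_field]
      exact div_pos_of_neg_of_neg h1 h3
    linarith
  rcases hle.lt_or_eq with h | h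
  · exact h
  -- step 2 : deriv φ ts = 0 impossible
  exfalso
  have hpp : 0 < deriv (deriv φ) ts := by
    rw [hode, hval, Real.sin_pi_div_two, Real.cos_pi_div_two]
    simpa using div_pos hg hl
  have hev : ∀ᶠ t in nhds ts, 0 < deriv (deriv φ) t :=
    hc2.continuousAt.eventually_mem (Ioi_mem_nhds hpp)
  rw [Metric.eventually_nhds_iff] at hev
  obtain ⟨ε, hε, hball⟩ := hev
  set a : ℝ := max t₀ (ts - ε/2) with ha
  have hats : a < ts := by
    apply max_lt hts; linarith
  have hpos : ∀ t ∈ Set.Ioo a ts, 0 < deriv (deriv φ) t := by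
    intro t ht
    apply hball
    rw [Real.dist_eq, abs_lt]
    constructor
    · have : ts - ε/2 ≤ a := le_max_right _ _
      have := ht.1; nlinarith
    · nlinarith [ht.2]
  -- deriv φ strictly mono on Icc a ts
  have hmono : StrictMonoOn (deriv φ) (Set.Icc a ts) := by
    apply strictMonoOn_of_deriv_pos (convex_Icc _ _) hd2.continuous.continuousOn
    intro t ht
    rw [interior_Icc] at ht
    exact hpos t ht
  have hneg : ∀ t ∈ Set.Ioo a ts, deriv φ t < 0 := by
    intro t ht
    have := hmono ⟨le_of_lt ht.1, le_of_lt ht.2⟩ (Set.right_mem_Icc.mpr hats.le) ht.2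
    linarith [h ▸ this]
  have hanti : StrictAntiOn φ (Set.Icc a ts) := by
    apply strictAntiOn_of_deriv_neg (convex_Icc _ _) hd1.continuous.continuousOn
    intro t ht
    rw [interior_Icc] at ht
    exact hneg t ht
  set t1 : ℝ := (a + ts) / 2 with ht1
  have h1 : a < t1 := by simp [ht1]; linarith
  have h2' : t1 < ts := by simp [ht1]; linarith
  have hlt : φ ts < φ t1 :=
    hanti ⟨h1.le, h2'.le⟩ (Set.right_mem_Icc.mpr hats.le) h2'
  have := hmax t1 ⟨le_trans (le_max_left _ _) h1.le, h2'⟩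
  rw [hval] at hlt
  linarith

theorem stmt_4 (g l : ℝ) (hg : 0 < g) (hl : 0 < l)
    (f φ : ℝ → ℝ) (hf : ContDiff ℝ 2 f) (hφ : ContDiff ℝ 2 φ)
    (hode : ∀ t, deriv (deriv φ) t =
      (g / l) * Real.sin (φ t) - (deriv (deriv f) t / l) * Real.cos (φ t))
    (t₀ ts : ℝ) (h0 : φ t₀ ∈ Set.Ioo (-(π / 2)) (π / 2)) (hts : t₀ < ts)
    (hexit : |φ ts| = π / 2) (hfirst : ∀ t ∈ Set.Ico t₀ ts, |φ t| < π / 2) :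
    0 < φ ts * deriv φ ts := by
  have hπ : 0 < π / 2 := by positivity
  rcases abs_eq (le_of_lt hπ) |>.mp hexit with hv | hv
  · have := aux_exit g l hg hl f φ hφ hode t₀ ts hts hv
      (fun t ht => (abs_lt.mp (hfirst t ht)).2)
    rw [hv]; positivity
  · -- φ ts = -(π/2); apply aux to -φ, -f
    have hode' : ∀ t, deriv (deriv (fun s => -φ s)) t =
        (g / l) * Real.sin ((fun s => -φ s) t) -
          (deriv (deriv (fun s => -f s)) t / l) * Real.cos ((fun s => -φ s) t) := by
      intro t
      have e1 : deriv (fun s => -φ s) = fun s => -deriv φ s := by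
        funext s; exact deriv.neg
      have e2 : deriv (fun s => -f s) = fun s => -deriv f s := by
        funext s; exact deriv.neg
      rw [e1, e2]
      have e3 : deriv (fun s => -deriv φ s) t = -deriv (deriv φ) t := deriv.neg
      have e4 : deriv (fun s => -deriv f s) t = -deriv (deriv f) t := deriv.neg
      rw [e3, e4, hode t]
      simp [Real.sin_neg, Real.cos_neg]
      ring
    have hval' : (fun s => -φ s) ts = π / 2 := by simp [hv]
    have hlt := aux_exit g l hg hl (fun s => -f s) (fun s => -φ s) hφ.neg hode' t₀ ts hts hval'
      (fun t ht => by
        have := (abs_lt.mp (hfirst t ht)).1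
        simpa using by linarith)
    have e1 : deriv (fun s => -φ s) ts = -deriv φ ts := deriv.neg
    rw [e1] at hlt
    rw [hv]
    nlinarith
end

section
/- For every C² function f : [0, ∞) → ℝ there exists φ₀ ∈ (−π/2, π/2) such that the solution of φ'' = (g/l)·sin φ − (f''/l)·cos φ with initial conditions φ(0) = φ₀, φ'(0) = 0 satisfies −π/2 < φ(t) < π/2 for all t ∈ [0, ∞). -/
open Real Set

namespace PendulumPf

noncomputable section


/-- clamp to `[-c, c]` -/
def clamp (c x : ℝ) : ℝ := max (-c) (min c x)

lemma clamp_eq {c x : ℝ} (h : |x| ≤ c) : clamp c x = x := by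
  rw [abs_le] at h
  rw [clamp, min_eq_right h.2, max_eq_right h.1]

lemma abs_clamp_le {c : ℝ} (hc : 0 ≤ c) (x : ℝ) : |clamp c x| ≤ c := by
  rw [abs_le, clamp]
  constructor
  · exact le_max_left _ _
  · exact max_le (by linarith) (min_le_left _ _)

lemma abs_clamp_sub_le (c x y : ℝ) : |clamp c x - clamp c y| ≤ |x - y| := by
  have h1 : x - y ≤ |x - y| := le_abs_self _
  have h2 : y - x ≤ |x - y| := by rw [abs_sub_comm]; exact le_abs_self _
  rw [clamp, clamp, abs_sub_le_iff]
  simp only [min_def, max_def]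
  split_ifs <;> constructor <;> linarith

lemma sin_lip (a b : ℝ) : |Real.sin a - Real.sin b| ≤ |a - b| := by
  rw [Real.sin_sub_sin]
  have h1 : |Real.sin ((a - b) / 2)| ≤ |a - b| / 2 := by
    have := Real.abs_sin_le_abs (x := (a - b) / 2)
    rwa [abs_div, abs_two] at this
  have h2 : |Real.cos ((a + b) / 2)| ≤ 1 := Real.abs_cos_le_one _
  calc |2 * Real.sin ((a - b) / 2) * Real.cos ((a + b) / 2)|
      = 2 * |Real.sin ((a - b) / 2)| * |Real.cos ((a + b) / 2)| := by
        rw [abs_mul, abs_mul, abs_two]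
    _ ≤ 2 * (|a - b| / 2) * 1 := by
        apply mul_le_mul _ h2 (abs_nonneg _) (by positivity)
        apply mul_le_mul_of_nonneg_left h1 (by norm_num)
    _ = |a - b| := by ring

lemma cos_lip (a b : ℝ) : |Real.cos a - Real.cos b| ≤ |a - b| := by
  rw [Real.cos_sub_cos]
  have h1 : |Real.sin ((a - b) / 2)| ≤ |a - b| / 2 := by
    have := Real.abs_sin_le_abs (x := (a - b) / 2)
    rwa [abs_div, abs_two] at this
  have h2 : |Real.sin ((a + b) / 2)| ≤ 1 := Real.abs_sin_le_one _
  calc |(-2) * Real.sin ((a + b) / 2) * Real.sin ((a - b) / 2)|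
      = 2 * |Real.sin ((a + b) / 2)| * |Real.sin ((a - b) / 2)| := by
        rw [abs_mul, abs_mul, abs_neg, abs_two]
    _ ≤ 2 * 1 * (|a - b| / 2) := by
        apply mul_le_mul _ h1 (abs_nonneg _) (by positivity)
        exact mul_le_mul_of_nonneg_left h2 (by norm_num)
    _ = |a - b| := by ring


/-- the pendulum vector field on `ℝ × ℝ` -/
def vf (g l : ℝ) (F : ℝ → ℝ) (t : ℝ) (p : ℝ × ℝ) : ℝ × ℝ :=
  (p.2, (g * Real.sin p.1 - F t * Real.cos p.1) / l)

/-- Lipschitz constant -/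
def Kc (g l M : ℝ) : NNReal := Real.toNNReal (max 1 ((g + M) / l))

lemma lip_aux {g l M : ℝ} (hg : 0 < g) (hl : 0 < l) {A : ℝ} (hA : |A| ≤ M)
    (ψ : ℝ → ℝ) (hψ : ∀ x y, |ψ x - ψ y| ≤ |x - y|) :
    LipschitzWith (Kc g l M)
      (fun p : ℝ × ℝ => (ψ p.2, (g * Real.sin p.1 - A * Real.cos p.1) / l)) := by
  have hM : 0 ≤ M := (abs_nonneg A).trans hA
  have hK : (0:ℝ) ≤ max 1 ((g + M) / l) := le_trans zero_le_one (le_max_left _ _)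
  rw [lipschitzWith_iff_dist_le_mul]
  intro p q
  have hKcoe : ((Kc g l M : NNReal) : ℝ) = max 1 ((g + M) / l) := Real.coe_toNNReal _ hK
  rw [hKcoe, Prod.dist_eq, Prod.dist_eq]
  simp only [Real.dist_eq]
  have hd1 : |p.1 - q.1| ≤ max |p.1 - q.1| |p.2 - q.2| := le_max_left _ _
  have hd2 : |p.2 - q.2| ≤ max |p.1 - q.1| |p.2 - q.2| := le_max_right _ _
  have hdn : (0:ℝ) ≤ max |p.1 - q.1| |p.2 - q.2| := le_trans (abs_nonneg _) hd1
  apply max_le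
  · calc |ψ p.2 - ψ q.2| ≤ |p.2 - q.2| := hψ _ _
      _ ≤ max |p.1 - q.1| |p.2 - q.2| := hd2
      _ ≤ max 1 ((g + M) / l) * max |p.1 - q.1| |p.2 - q.2| := by
          nlinarith [le_max_left 1 ((g + M) / l)]
  · have hnum : |(g * Real.sin p.1 - A * Real.cos p.1) -
        (g * Real.sin q.1 - A * Real.cos q.1)| ≤ (g + M) * |p.1 - q.1| := by
      have e : (g * Real.sin p.1 - A * Real.cos p.1) - (g * Real.sin q.1 - A * Real.cos q.1)
          = g * (Real.sin p.1 - Real.sin q.1) - A * (Real.cos p.1 - Real.cos q.1) := by ring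
      rw [e]
      calc |g * (Real.sin p.1 - Real.sin q.1) - A * (Real.cos p.1 - Real.cos q.1)|
          ≤ |g * (Real.sin p.1 - Real.sin q.1)| + |A * (Real.cos p.1 - Real.cos q.1)| :=
            abs_sub _ _
        _ = g * |Real.sin p.1 - Real.sin q.1| + |A| * |Real.cos p.1 - Real.cos q.1| := by
            rw [abs_mul, abs_mul, abs_of_pos hg]
        _ ≤ g * |p.1 - q.1| + M * |p.1 - q.1| := by
            apply add_le_add
            · exact mul_le_mul_of_nonneg_left (sin_lip _ _) hg.le
            · exact mul_le_mul hA (cos_lip _ _) (abs_nonneg _) hM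
        _ = (g + M) * |p.1 - q.1| := by ring
    calc |(g * Real.sin p.1 - A * Real.cos p.1) / l - (g * Real.sin q.1 - A * Real.cos q.1) / l|
        = |(g * Real.sin p.1 - A * Real.cos p.1) - (g * Real.sin q.1 - A * Real.cos q.1)| / l := by
          rw [div_sub_div_same, abs_div, abs_of_pos hl]
      _ ≤ ((g + M) * |p.1 - q.1|) / l := by
          gcongr
      _ = ((g + M) / l) * |p.1 - q.1| := by ring
      _ ≤ max 1 ((g + M) / l) * max |p.1 - q.1| |p.2 - q.2| := by
          apply mul_le_mul (le_max_right _ _) hd1 (abs_nonneg _) hK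


lemma hasDerivWithinAt_snd {x : ℝ → ℝ × ℝ} {v : ℝ × ℝ} {s : Set ℝ} {t : ℝ}
    (h : HasDerivWithinAt x v s t) :
    HasDerivWithinAt (fun u => (x u).2) v.2 s t :=
  (ContinuousLinearMap.snd ℝ ℝ ℝ).hasFDerivAt.comp_hasDerivWithinAt t h

lemma hasDerivAt_fst {x : ℝ → ℝ × ℝ} {v : ℝ × ℝ} {t : ℝ}
    (h : HasDerivAt x v t) : HasDerivAt (fun u => (x u).1) v.1 t :=
  (ContinuousLinearMap.fst ℝ ℝ ℝ).hasFDerivAt.comp_hasDerivAt t h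

lemma hasDerivAt_snd {x : ℝ → ℝ × ℝ} {v : ℝ × ℝ} {t : ℝ}
    (h : HasDerivAt x v t) : HasDerivAt (fun u => (x u).2) v.2 t :=
  (ContinuousLinearMap.snd ℝ ℝ ℝ).hasFDerivAt.comp_hasDerivAt t h

lemma exists_sol_Ioo {g l : ℝ} (hg : 0 < g) (hl : 0 < l) {F : ℝ → ℝ} (hF : Continuous F)
    (a : ℝ) (N : ℝ) (hN : 0 < N) :
    ∃ x : ℝ → ℝ × ℝ, x 0 = (a, 0) ∧ ∀ t ∈ Ioo (-N) N, HasDerivAt x (vf g l F t (x t)) t := by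
  obtain ⟨M₀, hM₀⟩ :=
    (isCompact_Icc (a := -N) (b := N)).exists_bound_of_continuousOn hF.continuousOn
  set M : ℝ := max M₀ 0 with hMdef
  have hM0 : 0 ≤ M := le_max_right _ _
  have hM : ∀ t ∈ Icc (-N) N, |F t| ≤ M := fun t ht => by
    have := hM₀ t ht
    rw [Real.norm_eq_abs] at this
    exact this.trans (le_max_left _ _)
  set C₂ : ℝ := (g + M) / l with hC2def
  have hC₂ : 0 ≤ C₂ := div_nonneg (by positivity) hl.le
  set B : ℝ := N * C₂ + 1 with hBdef
  have hB : 0 < B := by positivity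
  set w : ℝ → ℝ × ℝ → ℝ × ℝ :=
    fun t p => (clamp B p.2, (g * Real.sin p.1 - F t * Real.cos p.1) / l) with hwdef
  set C : ℝ := max B C₂ with hCdef
  have hC : 0 ≤ C := le_trans hB.le (le_max_left _ _)
  have hPL : IsPicardLindelof w (⟨0, ⟨by linarith, hN.le⟩⟩ : Icc (-N) N) (a, 0)
      (C * N).toNNReal 0 C.toNNReal (Kc g l M) := by
    constructor
    · intro t ht
      exact (lip_aux hg hl (hM t ht) (clamp B) (fun x y => abs_clamp_sub_le B x y)).lipschitzOnWith
    · intro x _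
      exact (Continuous.continuousOn (by fun_prop))
    · intro t ht x _
      rw [Real.coe_toNNReal _ hC]
      have h1 : |clamp B x.2| ≤ B := abs_clamp_le hB.le _
      have h2 : |(g * Real.sin x.1 - F t * Real.cos x.1) / l| ≤ C₂ := by
        rw [abs_div, abs_of_pos hl, hC2def]
        have hnum : |g * Real.sin x.1 - F t * Real.cos x.1| ≤ g + M := by
          calc |g * Real.sin x.1 - F t * Real.cos x.1|
              ≤ |g * Real.sin x.1| + |F t * Real.cos x.1| := abs_sub _ _
            _ = g * |Real.sin x.1| + |F t| * |Real.cos x.1| := by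
                rw [abs_mul, abs_mul, abs_of_pos hg]
            _ ≤ g * 1 + M * 1 := by
                apply add_le_add
                · exact mul_le_mul_of_nonneg_left (Real.abs_sin_le_one _) hg.le
                · exact mul_le_mul (hM t ht) (Real.abs_cos_le_one _) (abs_nonneg _) hM0
            _ = g + M := by ring
        gcongr
      rw [Prod.norm_def]
      apply max_le
      · exact le_trans h1 (le_max_left _ _)
      · exact le_trans h2 (le_max_right _ _)
    · rw [Real.coe_toNNReal _ hC, Real.coe_toNNReal _ (mul_nonneg hC hN.le), NNReal.coe_zero]
      show C * max (N - 0) (0 - -N) ≤ C * N - 0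
      rw [sub_zero]
      rw [sub_zero, zero_sub, neg_neg, max_self]
  obtain ⟨α, hα0, hαd⟩ : ∃ α : ℝ → ℝ × ℝ, α 0 = (a, 0) ∧
      ∀ t ∈ Icc (-N) N, HasDerivWithinAt α (w t (α t)) (Icc (-N) N) t :=
    hPL.exists_eq_forall_mem_Icc_hasDerivWithinAt₀
  have hmem0 : (0:ℝ) ∈ Icc (-N) N := ⟨by linarith, hN.le⟩
  have hbound : ∀ t ∈ Icc (-N) N, |(α t).2| ≤ N * C₂ := by
    intro t ht
    have hd : ∀ s ∈ Icc (-N) N,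
        HasDerivWithinAt (fun u => (α u).2) ((w s (α s)).2) (Icc (-N) N) s :=
      fun s hs => hasDerivWithinAt_snd (hαd s hs)
    have hbd : ∀ s ∈ Icc (-N) N, ‖(w s (α s)).2‖ ≤ C₂ := by
      intro s hs
      rw [Real.norm_eq_abs]
      show |(g * Real.sin ((α s).1) - F s * Real.cos ((α s).1)) / l| ≤ C₂
      rw [abs_div, abs_of_pos hl, hC2def]
      have hnum : |g * Real.sin ((α s).1) - F s * Real.cos ((α s).1)| ≤ g + M := by
        calc |g * Real.sin ((α s).1) - F s * Real.cos ((α s).1)|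
            ≤ |g * Real.sin ((α s).1)| + |F s * Real.cos ((α s).1)| := abs_sub _ _
          _ = g * |Real.sin ((α s).1)| + |F s| * |Real.cos ((α s).1)| := by
              rw [abs_mul, abs_mul, abs_of_pos hg]
          _ ≤ g * 1 + M * 1 := by
              apply add_le_add
              · exact mul_le_mul_of_nonneg_left (Real.abs_sin_le_one _) hg.le
              · exact mul_le_mul (hM s hs) (Real.abs_cos_le_one _) (abs_nonneg _) hM0
          _ = g + M := by ring
      gcongr
    have := (convex_Icc (-N) N).norm_image_sub_le_of_norm_hasDerivWithin_le hd hbd hmem0 ht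
    rw [hα0] at this
    simp only [Real.norm_eq_abs] at this
    have habs : |t - 0| ≤ N := by
      rw [sub_zero, abs_le]; exact ⟨ht.1, ht.2⟩
    calc |(α t).2| = |(α t).2 - 0| := by rw [sub_zero]
      _ ≤ C₂ * |t - 0| := this
      _ ≤ C₂ * N := mul_le_mul_of_nonneg_left habs hC₂
      _ = N * C₂ := mul_comm _ _
  have hweq : ∀ t ∈ Icc (-N) N, w t (α t) = vf g l F t (α t) := by
    intro t ht
    have : clamp B (α t).2 = (α t).2 :=
      clamp_eq (le_trans (hbound t ht) (by rw [hBdef]; linarith))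
    rw [hwdef, vf]
    simp only [this]
  refine ⟨α, hα0, fun t ht => ?_⟩
  have h1 := (hαd t (Ioo_subset_Icc_self ht)).hasDerivAt (Icc_mem_nhds ht.1 ht.2)
  rwa [hweq t (Ioo_subset_Icc_self ht)] at h1


/-- the time-clamped vector field, globally Lipschitz in the state -/
lemma clamped_lip {g l : ℝ} (hg : 0 < g) (hl : 0 < l) {F : ℝ → ℝ} (hF : Continuous F)
    (c : ℝ) (hc : 0 ≤ c) :
    ∃ M : ℝ, (∀ s ∈ Icc (-c) c, |F s| ≤ M) ∧
      ∀ t : ℝ, LipschitzWith (Kc g l M) (fun p => vf g l F (clamp c t) p) := by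
  obtain ⟨M₀, hM₀⟩ :=
    (isCompact_Icc (a := -c) (b := c)).exists_bound_of_continuousOn hF.continuousOn
  refine ⟨max M₀ 0, fun s hs => ?_, fun t => ?_⟩
  · have := hM₀ s hs
    rw [Real.norm_eq_abs] at this
    exact this.trans (le_max_left _ _)
  · have hmem : clamp c t ∈ Icc (-c) c := by
      have := abs_clamp_le hc t
      rw [abs_le] at this
      exact this
    have hA : |F (clamp c t)| ≤ max M₀ 0 := by
      have := hM₀ _ hmem
      rw [Real.norm_eq_abs] at this
      exact this.trans (le_max_left _ _)
    exact lip_aux hg hl hA id (fun x y => le_refl _)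

lemma sol_unique {g l : ℝ} (hg : 0 < g) (hl : 0 < l) {F : ℝ → ℝ} (hF : Continuous F)
    (c : ℝ) (hc : 0 < c) (x y : ℝ → ℝ × ℝ)
    (hx : ∀ t ∈ Ioo (-c) c, HasDerivAt x (vf g l F t (x t)) t)
    (hy : ∀ t ∈ Ioo (-c) c, HasDerivAt y (vf g l F t (y t)) t)
    (h0 : x 0 = y 0) : EqOn x y (Ioo (-c) c) := by
  obtain ⟨M, _, hlip⟩ := clamped_lip hg hl hF c hc.le
  have hfix : ∀ t ∈ Ioo (-c) c, clamp c t = t := by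
    intro t ht
    exact clamp_eq (by rw [abs_le]; exact ⟨ht.1.le, ht.2.le⟩)
  apply ODE_solution_unique_of_mem_Ioo
    (v := fun t p => vf g l F (clamp c t) p) (s := fun _ => univ)
    (fun t _ => (hlip t).lipschitzOnWith) (⟨by linarith, hc⟩ : (0:ℝ) ∈ Ioo (-c) c)
    ?_ ?_ h0
  · intro t ht
    refine ⟨?_, trivial⟩
    show HasDerivAt x (vf g l F (clamp c t) (x t)) t
    rw [hfix t ht]
    exact hx t ht
  · intro t ht
    refine ⟨?_, trivial⟩
    show HasDerivAt y (vf g l F (clamp c t) (y t)) t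
    rw [hfix t ht]
    exact hy t ht

lemma exists_global {g l : ℝ} (hg : 0 < g) (hl : 0 < l) {F : ℝ → ℝ} (hF : Continuous F)
    (a : ℝ) :
    ∃ x : ℝ → ℝ × ℝ, x 0 = (a, 0) ∧ ∀ t, HasDerivAt x (vf g l F t (x t)) t := by
  choose xs hxs0 hxsd using fun n : ℕ =>
    exists_sol_Ioo hg hl hF a ((n : ℝ) + 1) (by positivity)
  have mono : ∀ m n : ℕ, m ≤ n → ∀ t ∈ Ioo (-((m:ℝ)+1)) ((m:ℝ)+1),
      HasDerivAt (xs n) (vf g l F t (xs n t)) t := by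
    intro m n hmn t ht
    apply hxsd n t
    have hcast : (m : ℝ) ≤ (n : ℝ) := Nat.cast_le.mpr hmn
    exact ⟨by linarith [ht.1], by linarith [ht.2]⟩
  have agree : ∀ m n : ℕ, m ≤ n → EqOn (xs m) (xs n) (Ioo (-((m:ℝ)+1)) ((m:ℝ)+1)) := by
    intro m n hmn
    exact sol_unique hg hl hF _ (by positivity) _ _ (hxsd m) (mono m n hmn)
      (by rw [hxs0, hxs0])
  set X : ℝ → ℝ × ℝ := fun t => xs ⌈|t|⌉₊ t with hX
  have hagree : ∀ n : ℕ, ∀ t ∈ Ioo (-((n:ℝ)+1)) ((n:ℝ)+1), X t = xs n t := by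
    intro n t ht
    set m := ⌈|t|⌉₊ with hm
    have htm : |t| < (m : ℝ) + 1 := lt_of_le_of_lt (Nat.le_ceil _) (by rw [← hm]; norm_num)
    have htn : |t| < (n : ℝ) + 1 := abs_lt.mpr ⟨by linarith [ht.1], ht.2⟩
    rcases le_total m n with h | h
    · exact agree m n h (abs_lt.mp htm |> fun hh => ⟨by linarith [hh.1], hh.2⟩)
    · exact (agree n m h ⟨by linarith [(abs_lt.mp htn).1], (abs_lt.mp htn).2⟩).symm
  refine ⟨X, ?_, ?_⟩
  · exact hxs0 _
  · intro t
    set n := ⌈|t|⌉₊ with hn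
    have ht : t ∈ Ioo (-((n:ℝ)+1)) ((n:ℝ)+1) := by
      have htm : |t| < (n : ℝ) + 1 := lt_of_le_of_lt (Nat.le_ceil _) (by rw [← hn]; norm_num)
      exact ⟨by linarith [(abs_lt.mp htm).1], (abs_lt.mp htm).2⟩
    have hev : X =ᶠ[nhds t] xs n :=
      Filter.eventuallyEq_of_mem (isOpen_Ioo.mem_nhds ht) (hagree n)
    have := (hxsd n t ht).congr_of_eventuallyEq hev
    rwa [← hagree n t ht] at this


lemma cont_dep {g l : ℝ} (hg : 0 < g) (hl : 0 < l) {F : ℝ → ℝ} (hF : Continuous F)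
    (T : ℝ) (hT : 0 ≤ T) :
    ∃ D : ℝ, 0 < D ∧ ∀ x y : ℝ → ℝ × ℝ,
      (∀ t, HasDerivAt x (vf g l F t (x t)) t) →
      (∀ t, HasDerivAt y (vf g l F t (y t)) t) →
      ∀ t ∈ Icc 0 T, dist (x t) (y t) ≤ dist (x 0) (y 0) * D := by
  obtain ⟨M, _, hlip⟩ := clamped_lip hg hl hF T hT
  refine ⟨Real.exp ((Kc g l M : ℝ) * T), Real.exp_pos _, ?_⟩
  intro x y hx hy t ht
  have hKnn : (0:ℝ) ≤ (Kc g l M : ℝ) := (Kc g l M).coe_nonneg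
  have key := dist_le_of_trajectories_ODE
    (v := fun t p => vf g l F (clamp T t) p) (K := Kc g l M)
    (f := x) (g := y) (a := 0) (b := T) (δ := dist (x 0) (y 0))
    hlip
    (fun s _ => ((hx s).continuousAt).continuousWithinAt)
    ?_
    (fun s _ => ((hy s).continuousAt).continuousWithinAt)
    ?_
    le_rfl t ht
  · calc dist (x t) (y t) ≤ dist (x 0) (y 0) * Real.exp ((Kc g l M : ℝ) * (t - 0)) := key
      _ ≤ dist (x 0) (y 0) * Real.exp ((Kc g l M : ℝ) * T) := by
          apply mul_le_mul_of_nonneg_left _ dist_nonneg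
          apply Real.exp_le_exp.mpr
          apply mul_le_mul_of_nonneg_left _ hKnn
          linarith [ht.2]
  · intro s hs
    have hcl : clamp T s = s := clamp_eq (by rw [abs_le]; exact ⟨by linarith [hs.1], hs.2.le⟩)
    show HasDerivWithinAt x (vf g l F (clamp T s) (x s)) (Ici s) s
    rw [hcl]
    exact (hx s).hasDerivWithinAt
  · intro s hs
    have hcl : clamp T s = s := clamp_eq (by rw [abs_le]; exact ⟨by linarith [hs.1], hs.2.le⟩)
    show HasDerivWithinAt y (vf g l F (clamp T s) (y s)) (Ici s) s
    rw [hcl]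
    exact (hy s).hasDerivWithinAt


/-- If `ω t₀ ≥ 0` and either `ω t₀ > 0` or `ω' t₀ > 0`, then `φ` (an antiderivative of `ω`)
exceeds `φ t₀` shortly after `t₀`. -/
lemma push (φ ω : ℝ → ℝ) (hφ : ∀ t, HasDerivAt φ (ω t) t) (hω : Continuous ω)
    (t₀ G : ℝ) (hG : HasDerivAt ω G t₀) (h1 : 0 ≤ ω t₀) (h2 : ω t₀ = 0 → 0 < G)
    (ε : ℝ) (hε : 0 < ε) :
    ∃ u, t₀ < u ∧ u ≤ t₀ + ε ∧ φ t₀ < φ u := by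
  have key : ∃ δ, 0 < δ ∧ δ ≤ ε ∧ ∀ s ∈ Ioo t₀ (t₀ + δ), 0 < ω s := by
    rcases h1.eq_or_lt with h | h
    · -- ω t₀ = 0, use the derivative
      have hGpos : 0 < G := h2 h.symm
      have hslope : Filter.Tendsto (slope ω t₀) (nhdsWithin t₀ {t₀}ᶜ) (nhds G) :=
        hasDerivAt_iff_tendsto_slope.mp hG
      have hslope' : Filter.Tendsto (slope ω t₀) (nhdsWithin t₀ (Ioi t₀)) (nhds G) :=
        hslope.mono_left (nhdsWithin_mono _ (fun s hs => ne_of_gt hs))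
      have hev : ∀ᶠ s in nhdsWithin t₀ (Ioi t₀), 0 < slope ω t₀ s :=
        hslope'.eventually (eventually_gt_nhds hGpos)
      obtain ⟨u, hu, hsub⟩ := mem_nhdsGT_iff_exists_Ioo_subset.mp hev
      refine ⟨min (u - t₀) ε, lt_min (by linarith [mem_Ioi.mp hu]) hε, min_le_right _ _, ?_⟩
      intro s hs
      have hsu : s ∈ Ioo t₀ u := ⟨hs.1, lt_of_lt_of_le hs.2 (by
        have := min_le_left (u - t₀) ε; linarith)⟩
      have := hsub hsu
      have hslope_pos : 0 < (s - t₀)⁻¹ * (ω s - ω t₀) := by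
        simpa [slope_def_field, slope] using this
      have hst : 0 < s - t₀ := by linarith [hs.1]
      nlinarith [mul_pos hslope_pos hst, inv_pos.mpr hst]
    · -- ω t₀ > 0, use continuity
      have hev : ∀ᶠ s in nhds t₀, 0 < ω s := hω.continuousAt.eventually (eventually_gt_nhds h)
      obtain ⟨δ', hδ', hsub⟩ := Metric.eventually_nhds_iff.mp hev
      refine ⟨min (δ' / 2) ε, lt_min (by linarith) hε, min_le_right _ _, ?_⟩
      intro s hs
      apply hsub
      rw [Real.dist_eq, abs_lt]
      have h1' := hs.1
      have h2' := hs.2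
      have := min_le_left (δ' / 2) ε
      constructor <;> linarith
  obtain ⟨δ, hδ, hδε, hpos⟩ := key
  have hmono : StrictMonoOn φ (Icc t₀ (t₀ + δ)) := by
    apply strictMonoOn_of_deriv_pos (convex_Icc _ _)
    · exact fun s _ => (hφ s).continuousAt.continuousWithinAt
    · intro s hs
      rw [interior_Icc] at hs
      rw [(hφ s).deriv]
      exact hpos s hs
  refine ⟨t₀ + δ, by linarith, by linarith, ?_⟩
  exact hmono (left_mem_Icc.mpr (by linarith)) (right_mem_Icc.mpr (by linarith)) (by linarith)

/-- left derivative sign at a running maximum approached from the left -/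
lemma left_nonneg (φ : ℝ → ℝ) {w t₀ : ℝ} (hφ : HasDerivAt φ w t₀) (ht : 0 < t₀)
    (hlt : ∀ s ∈ Ico (0:ℝ) t₀, φ s < φ t₀) : 0 ≤ w := by
  have hslope : Filter.Tendsto (slope φ t₀) (nhdsWithin t₀ {t₀}ᶜ) (nhds w) :=
    hasDerivAt_iff_tendsto_slope.mp hφ
  have hslope' : Filter.Tendsto (slope φ t₀) (nhdsWithin t₀ (Iio t₀)) (nhds w) :=
    hslope.mono_left (nhdsWithin_mono _ (fun s hs => ne_of_lt hs))
  have hev : ∀ᶠ s in nhdsWithin t₀ (Iio t₀), 0 ≤ slope φ t₀ s := by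
    have hIoo : Ioo (0:ℝ) t₀ ∈ nhdsWithin t₀ (Iio t₀) :=
      Ioo_mem_nhdsLT_of_mem ⟨ht, le_refl _⟩
    apply Filter.eventually_of_mem hIoo
    intro s hs
    have h1 : φ s < φ t₀ := hlt s ⟨hs.1.le, hs.2⟩
    have h2 : s - t₀ < 0 := by linarith [hs.2]
    have : slope φ t₀ s = (t₀ - s)⁻¹ * (φ t₀ - φ s) := by
      rw [slope_comm]; simp [slope_def_field, slope]
    rw [this]
    exact mul_nonneg (inv_nonneg.mpr (by linarith)) (by linarith)
  exact ge_of_tendsto hslope' hev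


lemma cross {g l : ℝ} (hg : 0 < g) (hl : 0 < l) (F φ ω : ℝ → ℝ)
    (hφ : ∀ t, HasDerivAt φ (ω t) t)
    (hω : ∀ t, HasDerivAt ω ((g * Real.sin (φ t) - F t * Real.cos (φ t)) / l) t)
    (t₀ : ℝ) (hφt : φ t₀ = π / 2) (hωt : 0 ≤ ω t₀) :
    ∃ u, t₀ < u ∧ π / 2 < φ u ∧ ∀ s ∈ Icc t₀ u, 0 < φ s := by
  have hφcont : Continuous φ :=
    Differentiable.continuous (fun t => (hφ t).differentiableAt)
  have hωcont : Continuous ω :=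
    Differentiable.continuous (fun t => (hω t).differentiableAt)
  -- φ stays positive near t₀
  have hev : ∀ᶠ s in nhds t₀, 0 < φ s := by
    apply hφcont.continuousAt.eventually (p := fun y => 0 < y)
    apply eventually_gt_nhds
    rw [hφt]; positivity
  obtain ⟨ε', hε', hsub⟩ := Metric.eventually_nhds_iff.mp hev
  have hGpos : 0 < (g * Real.sin (φ t₀) - F t₀ * Real.cos (φ t₀)) / l := by
    rw [hφt, Real.sin_pi_div_two, Real.cos_pi_div_two]
    rw [mul_one, mul_zero, sub_zero]
    positivity
  obtain ⟨u, hu1, hu2, hu3⟩ := push φ ω hφ hωcont t₀ _ (hω t₀) hωt (fun _ => hGpos)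
    (ε' / 2) (by positivity)
  refine ⟨u, hu1, by rw [hφt] at hu3; exact hu3, ?_⟩
  intro s hs
  apply hsub
  rw [Real.dist_eq, abs_lt]
  constructor <;> [linarith [hs.1, hs.2]; linarith [hs.1, hs.2]]

lemma crossB {g l : ℝ} (hg : 0 < g) (hl : 0 < l) (F φ ω : ℝ → ℝ)
    (hφ : ∀ t, HasDerivAt φ (ω t) t)
    (hω : ∀ t, HasDerivAt ω ((g * Real.sin (φ t) - F t * Real.cos (φ t)) / l) t)
    (t₀ : ℝ) (hφt : φ t₀ = -(π / 2)) (hωt : ω t₀ ≤ 0) :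
    ∃ u, t₀ < u ∧ φ u < -(π / 2) ∧ ∀ s ∈ Icc t₀ u, φ s < 0 := by
  have h := cross hg hl (fun t => -F t) (fun t => -φ t) (fun t => -ω t)
    (fun t => (hφ t).neg) ?_ t₀ (by rw [hφt]; ring) (by linarith)
  · obtain ⟨u, hu1, hu2, hu3⟩ := h
    refine ⟨u, hu1, by linarith, fun s hs => by linarith [hu3 s hs]⟩
  · intro t
    have := (hω t).neg
    refine this.congr_deriv ?_
    simp only [Real.sin_neg, Real.cos_neg]
    ring



end

end PendulumPf

open Real PendulumPf


theorem stmt_6 (g l : ℝ) (hg : 0 < g) (hl : 0 < l)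
    (f : ℝ → ℝ) (hf : ContDiff ℝ 2 f) :
    ∃ φ₀ ∈ Set.Ioo (-(π / 2)) (π / 2), ∃ φ : ℝ → ℝ,
      ContDiff ℝ 2 φ ∧
      (∀ t ≥ 0, deriv (deriv φ) t =
        (g / l) * Real.sin (φ t) - (deriv (deriv f) t / l) * Real.cos (φ t)) ∧
      φ 0 = φ₀ ∧ deriv φ 0 = 0 ∧
      ∀ t ≥ 0, φ t ∈ Set.Ioo (-(π / 2)) (π / 2) := by
  classical
  have hπ : (0:ℝ) < π / 2 := by positivity
  -- continuity of f''
  set F : ℝ → ℝ := deriv (deriv f) with hFdef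
  have hf' : ContDiff ℝ (1 + 1) f := by
    rw [show ((1:WithTop ℕ∞) + 1) = 2 by norm_num]
    exact hf
  have h2 : ContDiff ℝ 1 (deriv f) := (contDiff_succ_iff_deriv.mp hf').2.2
  have hF : Continuous F := (contDiff_one_iff_deriv.mp h2).2
  -- global solutions
  choose X hX0 hXd using fun a : ℝ => exists_global hg hl hF a
  set φf : ℝ → ℝ → ℝ := fun a t => (X a t).1 with hφfdef
  set ωf : ℝ → ℝ → ℝ := fun a t => (X a t).2 with hωfdef
  have hφd : ∀ a t, HasDerivAt (φf a) (ωf a t) t := fun a t => hasDerivAt_fst (hXd a t)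
  have hωd : ∀ a t, HasDerivAt (ωf a)
      ((g * Real.sin (φf a t) - F t * Real.cos (φf a t)) / l) t :=
    fun a t => hasDerivAt_snd (hXd a t)
  have hφ0 : ∀ a, φf a 0 = a := fun a => by
    show (X a 0).1 = a
    rw [hX0]
  have hω0 : ∀ a, ωf a 0 = 0 := fun a => by
    show (X a 0).2 = 0
    rw [hX0]
  have hφcont : ∀ a, Continuous (φf a) :=
    fun a => Differentiable.continuous (fun t => (hφd a t).differentiableAt)
  -- the two open sets
  set A : Set ℝ :=
    {a | ∃ t, 0 ≤ t ∧ π / 2 < φf a t ∧ ∀ s ∈ Set.Icc 0 t, -(π / 2) < φf a s} with hA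
  set B : Set ℝ :=
    {a | ∃ t, 0 ≤ t ∧ φf a t < -(π / 2) ∧ ∀ s ∈ Set.Icc 0 t, φf a s < π / 2} with hB
  have hAopen : IsOpen A := by
    rw [Metric.isOpen_iff]
    rintro a ⟨t, ht0, htop, hbot⟩
    obtain ⟨D, hD, hDle⟩ := cont_dep hg hl hF t ht0
    obtain ⟨s₀, hs₀mem, hs₀min⟩ := (isCompact_Icc (a := (0:ℝ)) (b := t)).exists_isMinOn
      (Set.nonempty_Icc.mpr ht0) ((hφcont a).continuousOn)
    set δ : ℝ := min (φf a s₀ + π / 2) (φf a t - π / 2) with hδdef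
    have hδpos : 0 < δ := lt_min (by linarith [hbot s₀ hs₀mem]) (by linarith)
    refine ⟨δ / D, by positivity, ?_⟩
    intro b hb
    rw [Metric.mem_ball, Real.dist_eq] at hb
    have hinit : dist (X b 0) (X a 0) = |b - a| := by
      rw [hX0, hX0, Prod.dist_eq]
      simp [Real.dist_eq]
    have hclose : ∀ s ∈ Set.Icc 0 t, |φf b s - φf a s| < δ := by
      intro s hs
      have h1 : dist (X b s) (X a s) ≤ dist (X b 0) (X a 0) * D :=
        hDle _ _ (hXd b) (hXd a) s hs
      have h2 : |φf b s - φf a s| ≤ dist (X b s) (X a s) := by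
        rw [Prod.dist_eq]
        exact le_trans (le_of_eq (Real.dist_eq _ _).symm) (le_max_left _ _)
      calc |φf b s - φf a s| ≤ dist (X b 0) (X a 0) * D := le_trans h2 h1
        _ = |b - a| * D := by rw [hinit]
        _ < (δ / D) * D := by exact mul_lt_mul_of_pos_right hb hD
        _ = δ := by field_simp
    refine ⟨t, ht0, ?_, ?_⟩
    · have h1 := hclose t (Set.right_mem_Icc.mpr ht0)
      have h2 : δ ≤ φf a t - π / 2 := min_le_right _ _
      rw [abs_lt] at h1
      linarith [h1.1]
    · intro s hs
      have h1 := hclose s hs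
      have h2 : φf a s₀ ≤ φf a s := hs₀min hs
      have h3 : δ ≤ φf a s₀ + π / 2 := min_le_left _ _
      rw [abs_lt] at h1
      linarith [h1.1]
  have hBopen : IsOpen B := by
    rw [Metric.isOpen_iff]
    rintro a ⟨t, ht0, htop, hbot⟩
    obtain ⟨D, hD, hDle⟩ := cont_dep hg hl hF t ht0
    obtain ⟨s₀, hs₀mem, hs₀max⟩ := (isCompact_Icc (a := (0:ℝ)) (b := t)).exists_isMaxOn
      (Set.nonempty_Icc.mpr ht0) ((hφcont a).continuousOn)
    set δ : ℝ := min (π / 2 - φf a s₀) (-(π / 2) - φf a t) with hδdef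
    have hδpos : 0 < δ := lt_min (by linarith [hbot s₀ hs₀mem]) (by linarith)
    refine ⟨δ / D, by positivity, ?_⟩
    intro b hb
    rw [Metric.mem_ball, Real.dist_eq] at hb
    have hinit : dist (X b 0) (X a 0) = |b - a| := by
      rw [hX0, hX0, Prod.dist_eq]
      simp [Real.dist_eq]
    have hclose : ∀ s ∈ Set.Icc 0 t, |φf b s - φf a s| < δ := by
      intro s hs
      have h1 : dist (X b s) (X a s) ≤ dist (X b 0) (X a 0) * D :=
        hDle _ _ (hXd b) (hXd a) s hs
      have h2 : |φf b s - φf a s| ≤ dist (X b s) (X a s) := by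
        rw [Prod.dist_eq]
        exact le_trans (le_of_eq (Real.dist_eq _ _).symm) (le_max_left _ _)
      calc |φf b s - φf a s| ≤ dist (X b 0) (X a 0) * D := le_trans h2 h1
        _ = |b - a| * D := by rw [hinit]
        _ < (δ / D) * D := by exact mul_lt_mul_of_pos_right hb hD
        _ = δ := by field_simp
    refine ⟨t, ht0, ?_, ?_⟩
    · have h1 := hclose t (Set.right_mem_Icc.mpr ht0)
      have h2 : δ ≤ -(π / 2) - φf a t := min_le_right _ _
      rw [abs_lt] at h1
      linarith [h1.2]
    · intro s hs
      have h1 := hclose s hs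
      have h2 : φf a s ≤ φf a s₀ := hs₀max hs
      have h3 : δ ≤ π / 2 - φf a s₀ := min_le_left _ _
      rw [abs_lt] at h1
      linarith [h1.2]
  have hdisj : ∀ c, c ∈ A → c ∈ B → False := by
    rintro c ⟨t1, ht10, ht1top, ht1bot⟩ ⟨t2, ht20, ht2neg, ht2top⟩
    rcases le_total t1 t2 with h | h
    · have := ht2top t1 ⟨ht10, h⟩
      linarith
    · have := ht1bot t2 ⟨ht20, h⟩
      linarith
  have hmemA : π / 2 ∈ A := by
    obtain ⟨u, hu1, hu2, hu3⟩ := cross hg hl F (φf (π / 2)) (ωf (π / 2)) (hφd _) (hωd _) 0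
      (hφ0 _) (le_of_eq (hω0 _).symm)
    refine ⟨u, hu1.le, hu2, ?_⟩
    intro s hs
    have := hu3 s hs
    linarith
  have hmemB : -(π / 2) ∈ B := by
    obtain ⟨u, hu1, hu2, hu3⟩ := crossB hg hl F (φf (-(π / 2))) (ωf (-(π / 2))) (hφd _) (hωd _) 0
      (hφ0 _) (le_of_eq (hω0 _))
    refine ⟨u, hu1.le, hu2, ?_⟩
    intro s hs
    have := hu3 s hs
    linarith
  -- connectedness
  have hex : ∃ a ∈ Set.Icc (-(π / 2)) (π / 2), a ∉ A ∪ B := by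
    by_contra hcon
    push_neg at hcon
    have hsub : Set.Icc (-(π / 2)) (π / 2) ⊆ A ∪ B := fun a ha => hcon a ha
    have hpc := isPreconnected_Icc (a := -(π / 2)) (b := π / 2)
    obtain ⟨c, hc⟩ := hpc A B hAopen hBopen hsub
      ⟨π / 2, Set.right_mem_Icc.mpr (by linarith), hmemA⟩
      ⟨-(π / 2), Set.left_mem_Icc.mpr (by linarith), hmemB⟩
    exact hdisj c hc.2.1 hc.2.2
  obtain ⟨a, haI, haAB⟩ := hex
  have haA : a ∉ A := fun h => haAB (Or.inl h)
  have haB : a ∉ B := fun h => haAB (Or.inr h)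
  have haIoo : a ∈ Set.Ioo (-(π / 2)) (π / 2) := by
    rcases haI.1.eq_or_lt with h | h
    · exact absurd (h ▸ hmemB) haB
    rcases haI.2.eq_or_lt with h2 | h2
    · exact absurd (h2 ▸ hmemA) haA
    exact ⟨h, h2⟩
  -- the chosen solution never leaves the strip
  have hno : ∀ t, 0 ≤ t → φf a t ∈ Set.Ioo (-(π / 2)) (π / 2) := by
    by_contra hcon
    push_neg at hcon
    obtain ⟨t₁, ht₁0, ht₁⟩ := hcon
    set S : Set ℝ := {t | 0 ≤ t ∧ (φf a t ≤ -(π / 2) ∨ π / 2 ≤ φf a t)} with hS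
    have hSne : S.Nonempty := by
      refine ⟨t₁, ht₁0, ?_⟩
      by_cases hcase : -(π / 2) < φf a t₁
      · refine Or.inr (le_of_not_gt fun hl => ht₁ ⟨hcase, hl⟩)
      · exact Or.inl (le_of_not_gt hcase)
    have hScl : IsClosed S := by
      have h1 : IsClosed {t : ℝ | 0 ≤ t} := isClosed_le continuous_const continuous_id
      have h2 : IsClosed {t : ℝ | φf a t ≤ -(π / 2)} := isClosed_le (hφcont a) continuous_const
      have h3 : IsClosed {t : ℝ | π / 2 ≤ φf a t} := isClosed_le continuous_const (hφcont a)
      exact h1.inter (h2.union h3)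
    have hbddS : BddBelow S := ⟨0, fun s hs => hs.1⟩
    set t₀ := sInf S with ht₀def
    have ht₀S : t₀ ∈ S := hScl.csInf_mem hSne hbddS
    have ht₀0 : 0 ≤ t₀ := ht₀S.1
    have hbefore : ∀ s, 0 ≤ s → s < t₀ → -(π / 2) < φf a s ∧ φf a s < π / 2 := by
      intro s hs0 hst
      by_contra hc
      have hsS : s ∈ S := by
        refine ⟨hs0, ?_⟩
        push_neg at hc
        rcases lt_or_ge (-(π / 2)) (φf a s) with h | h
        · exact Or.inr (hc h)
        · exact Or.inl h
      exact absurd (csInf_le hbddS hsS) (not_le.mpr hst)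
    have ht₀pos : 0 < t₀ := by
      rcases ht₀0.eq_or_lt with h | h
      · exfalso
        have h2 := ht₀S.2
        rw [← h, hφ0] at h2
        rcases h2 with h1 | h1
        · linarith [haIoo.1]
        · linarith [haIoo.2]
      · exact h
    rcases ht₀S.2 with hneg | hpos
    · rcases hneg.eq_or_lt with heq | hlt
      · have hωneg : ωf a t₀ ≤ 0 := by
          have hln := left_nonneg (fun t => -(φf a t)) ((hφd a t₀).neg) ht₀pos ?_
          · linarith [hln]
          · intro s hs
            have hb := (hbefore s hs.1 hs.2).1
            rw [heq]
            linarith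
        obtain ⟨u, hu1, hu2, hu3⟩ := crossB hg hl F (φf a) (ωf a) (hφd a) (hωd a) t₀ heq hωneg
        apply haB
        refine ⟨u, by linarith, hu2, ?_⟩
        intro s hs
        rcases lt_or_ge s t₀ with h | h
        · exact (hbefore s hs.1 h).2
        · have := hu3 s ⟨h, hs.2⟩
          linarith
      · apply haB
        refine ⟨t₀, ht₀0, hlt, ?_⟩
        intro s hs
        rcases hs.2.eq_or_lt with h | h
        · rw [h]; linarith
        · exact (hbefore s hs.1 h).2
    · rcases hpos.eq_or_lt with heq | hlt
      · have hωpos : 0 ≤ ωf a t₀ := by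
          apply left_nonneg (φf a) (hφd a t₀) ht₀pos
          intro s hs
          rw [← heq]
          exact (hbefore s hs.1 hs.2).2
        obtain ⟨u, hu1, hu2, hu3⟩ := cross hg hl F (φf a) (ωf a) (hφd a) (hωd a) t₀ heq.symm hωpos
        apply haA
        refine ⟨u, by linarith, hu2, ?_⟩
        intro s hs
        rcases lt_or_ge s t₀ with h | h
        · exact (hbefore s hs.1 h).1
        · have := hu3 s ⟨h, hs.2⟩
          linarith
      · apply haA
        refine ⟨t₀, ht₀0, hlt, ?_⟩
        intro s hs
        rcases hs.2.eq_or_lt with h | h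
        · rw [h]; linarith
        · exact (hbefore s hs.1 h).1
  -- final packaging
  have hderivφ : deriv (φf a) = ωf a := funext fun t => (hφd a t).deriv
  have hderivω : deriv (ωf a) =
      fun t => (g * Real.sin (φf a t) - F t * Real.cos (φf a t)) / l :=
    funext fun t => (hωd a t).deriv
  refine ⟨a, haIoo, φf a, ?_, ?_, hφ0 a, ?_, fun t ht => hno t ht⟩
  · rw [show ((2 : WithTop ℕ∞)) = 1 + 1 by norm_num]
    refine contDiff_succ_iff_deriv.mpr ⟨fun t => (hφd a t).differentiableAt, ?_, ?_⟩
    · simp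
    · rw [hderivφ]
      refine contDiff_one_iff_deriv.mpr ⟨fun t => (hωd a t).differentiableAt, ?_⟩
      rw [hderivω]
      apply Continuous.div_const
      exact (continuous_const.mul (Real.continuous_sin.comp (hφcont a))).sub
        (hF.mul (Real.continuous_cos.comp (hφcont a)))
  · intro t _
    rw [hderivφ, hderivω]
    simp only []
    field_simp
  · rw [hderivφ]
    exact hω0 a
end

section
/- Suppose (φ, p) solves φ' = p, p' = (g/l)·sin φ − (f''/l)·cos φ, and at time t₀: p(t₀) = p' (a constant), φ(t₀) = arctan(f''(t₀)/g) (so ṗ(t₀) = 0), with p' > sup_t |f'''(t)|/g and p' > 0. Then p''(t₀) = (g/l)·p'·cos φ(t₀) − (f'''(t₀)/l)·cos φ(t₀) + ((f''(t₀))²/(g l))·p'·cos φ(t₀) > 0. -/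
open Real

theorem stmt_9 (g l : ℝ) (hg : 0 < g) (hl : 0 < l)
    (f : ℝ → ℝ) (hf : ContDiff ℝ 3 f)
    (φ p : ℝ → ℝ) (hφ : ContDiff ℝ 2 φ)
    (hp : ∀ t, p t = deriv φ t)
    (hode : ∀ t, deriv p t =
      (g / l) * Real.sin (φ t) - (deriv (deriv f) t / l) * Real.cos (φ t))
    (p' t₀ : ℝ) (hp'pos : 0 < p')
    (hp'sup : ∀ t, |deriv (deriv (deriv f)) t| / g < p')
    (hpt₀ : p t₀ = p')
    (hφt₀ : φ t₀ = Real.arctan (deriv (deriv f) t₀ / g)) :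
    deriv (deriv p) t₀ =
      (g / l) * p' * Real.cos (φ t₀)
        - (deriv (deriv (deriv f)) t₀ / l) * Real.cos (φ t₀)
        + ((deriv (deriv f) t₀) ^ 2 / (g * l)) * p' * Real.cos (φ t₀) ∧
    0 < deriv (deriv p) t₀ := by
  have hdp : deriv p = fun t =>
      (g / l) * Real.sin (φ t) - (deriv (deriv f) t / l) * Real.cos (φ t) :=
    funext hode
  -- differentiability facts
  have hφ1 : DifferentiableAt ℝ φ t₀ := (hφ.differentiable (by norm_num)).differentiableAt
  have hφ' : HasDerivAt φ p' t₀ := by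
    have := hφ1.hasDerivAt
    rwa [← hp, hpt₀] at this
  have hf2 : ContDiff ℝ 1 (deriv (deriv f)) := by
    have hf' : ContDiff ℝ ((2 : ℕ) + 1) f := by exact_mod_cast hf
    have h1 : ContDiff ℝ 2 (deriv f) := by
      exact_mod_cast (contDiff_succ_iff_deriv.mp hf').2.2
    have h1' : ContDiff ℝ ((1 : ℕ) + 1) (deriv f) := by exact_mod_cast h1
    exact_mod_cast (contDiff_succ_iff_deriv.mp h1').2.2
  have hf3 : HasDerivAt (deriv (deriv f)) (deriv (deriv (deriv f)) t₀) t₀ :=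
    ((hf2.differentiable (by norm_num)).differentiableAt).hasDerivAt
  set A := deriv (deriv f) t₀ with hA
  set B := deriv (deriv (deriv f)) t₀ with hB
  -- derivative of RHS
  have hsin : HasDerivAt (fun t => Real.sin (φ t)) (Real.cos (φ t₀) * p') t₀ :=
    (Real.hasDerivAt_sin (φ t₀)).comp t₀ hφ'
  have hcos : HasDerivAt (fun t => Real.cos (φ t)) (-Real.sin (φ t₀) * p') t₀ :=
    (Real.hasDerivAt_cos (φ t₀)).comp t₀ hφ'
  have hF : HasDerivAt (fun t =>
      (g / l) * Real.sin (φ t) - (deriv (deriv f) t / l) * Real.cos (φ t))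
      ((g / l) * (Real.cos (φ t₀) * p') -
        ((B / l) * Real.cos (φ t₀) + (A / l) * (-Real.sin (φ t₀) * p'))) t₀ := by
    exact (hsin.const_mul (g / l)).sub ((hf3.div_const l).mul hcos)
  have hD2 : deriv (deriv p) t₀ =
      (g / l) * (Real.cos (φ t₀) * p') -
        ((B / l) * Real.cos (φ t₀) + (A / l) * (-Real.sin (φ t₀) * p')) := by
    rw [hdp]; exact hF.deriv
  -- trig identities at t₀
  have hcospos : 0 < Real.cos (φ t₀) := by
    rw [hφt₀, Real.cos_arctan]; positivity
  have hsin_eq : Real.sin (φ t₀) = (A / g) * Real.cos (φ t₀) := by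
    rw [hφt₀, Real.sin_arctan, Real.cos_arctan]; ring
  have heq : deriv (deriv p) t₀ =
      (g / l) * p' * Real.cos (φ t₀) - (B / l) * Real.cos (φ t₀)
        + (A ^ 2 / (g * l)) * p' * Real.cos (φ t₀) := by
    rw [hD2, hsin_eq]; field_simp; ring
  refine ⟨heq, ?_⟩
  rw [heq]
  have hBlt : B < g * p' := by
    have := hp'sup t₀
    rw [div_lt_iff₀ hg] at this
    calc B ≤ |B| := le_abs_self B
    _ < p' * g := this
    _ = g * p' := by ring
  have h1 : 0 ≤ (A ^ 2 / (g * l)) * p' * Real.cos (φ t₀) := by positivity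
  have h2 : 0 < (g / l) * p' * Real.cos (φ t₀) - (B / l) * Real.cos (φ t₀) := by
    have key : (g / l) * p' * Real.cos (φ t₀) - (B / l) * Real.cos (φ t₀)
        = (g * p' - B) * Real.cos (φ t₀) / l := by ring
    rw [key]
    exact div_pos (mul_pos (sub_pos.2 hBlt) hcospos) hl
  linarith
end

section
/- Let h : [a,b] × W_a → W be a homeomorphism with π₁ ∘ h = π₁ and h([a,b] × W_a⁻⁻) = W⁻⁻, and let h' be another such homeomorphism. Then the monodromy maps m(x) = π₂ h(b, π₂ h⁻¹(a, x)) and m'(x) = π₂ h'(b, π₂ h'⁻¹(a, x)) are homotopic as maps of pairs (W_a, W_a⁻⁻) → (W_a, W_a⁻⁻). -/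
open Set

/-- `h` (with fiberwise inverse `hinv`) is a homeomorphism of the pair
`([a,b] × Wa, [a,b] × Wamm)` onto `(W, Wmm)` commuting with the projection
onto the time interval `[a,b]`. -/
def IsFiberedPairHomeo {M : Type*} [TopologicalSpace M]
    (a b : ℝ) (Wa Wamm : Set M) (W Wmm : Set (ℝ × M))
    (h hinv : ℝ → M → M) : Prop :=
  ContinuousOn (fun q : ℝ × M => h q.1 q.2) (Icc a b ×ˢ Wa) ∧
  ContinuousOn (fun q : ℝ × M => hinv q.1 q.2) W ∧
  (∀ t ∈ Icc a b, ∀ x ∈ Wa, (t, h t x) ∈ W) ∧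
  (∀ t ∈ Icc a b, ∀ x ∈ Wamm, (t, h t x) ∈ Wmm) ∧
  (∀ q ∈ W, q.1 ∈ Icc a b ∧ hinv q.1 q.2 ∈ Wa ∧ h q.1 (hinv q.1 q.2) = q.2) ∧
  (∀ q ∈ Wmm, hinv q.1 q.2 ∈ Wamm) ∧
  (∀ t ∈ Icc a b, ∀ x ∈ Wa, hinv t (h t x) = x)

/-- Monodromy maps obtained from two different fibered homeomorphisms of a
periodic Ważewski segment are homotopic as maps of pairs
`(W_a, W_a⁻⁻) → (W_a, W_a⁻⁻)`. -/
theorem stmt_13 {M : Type*} [TopologicalSpace M]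
    (a b : ℝ) (hab : a < b)
    (Wa Wamm : Set M) (W Wmm : Set (ℝ × M))
    (hWcpt : IsCompact W) (hWmmcpt : IsCompact Wmm) (hWmmW : Wmm ⊆ W)
    (hWa : ∀ x, (a, x) ∈ W ↔ x ∈ Wa) (hWb : ∀ x, (b, x) ∈ W ↔ x ∈ Wa)
    (hWamm : ∀ x, (a, x) ∈ Wmm ↔ x ∈ Wamm) (hWbmm : ∀ x, (b, x) ∈ Wmm ↔ x ∈ Wamm)
    (h hinv h' hinv' : ℝ → M → M)
    (hh : IsFiberedPairHomeo a b Wa Wamm W Wmm h hinv)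
    (hh' : IsFiberedPairHomeo a b Wa Wamm W Wmm h' hinv')
    (m m' : M → M)
    (hm : ∀ x ∈ Wa, m x = h b (hinv a x))
    (hm' : ∀ x ∈ Wa, m' x = h' b (hinv' a x)) :
    ∃ H : ℝ → M → M,
      ContinuousOn (fun q : ℝ × M => H q.1 q.2) (Icc (0 : ℝ) 1 ×ˢ Wa) ∧
      (∀ x ∈ Wa, H 0 x = m x) ∧
      (∀ x ∈ Wa, H 1 x = m' x) ∧
      (∀ s ∈ Icc (0 : ℝ) 1, MapsTo (H s) Wa Wa) ∧
      (∀ s ∈ Icc (0 : ℝ) 1, MapsTo (H s) Wamm Wamm) := by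
  
  obtain ⟨hc, hic, hmemW, hmemWmm, hinvW, hinvWmm, hli⟩ := hh
  obtain ⟨hc', hic', hmemW', hmemWmm', hinvW', hinvWmm', hli'⟩ := hh'
  have haI : a ∈ Icc a b := ⟨le_refl a, le_of_lt hab⟩
  have hbI : b ∈ Icc a b := ⟨le_of_lt hab, le_refl b⟩
  set ℓ : ℝ → ℝ := fun s => (1 - s) * b + s * a with hℓdef
  have hℓI : ∀ s ∈ Icc (0:ℝ) 1, ℓ s ∈ Icc a b := by
    intro s hs
    simp only [hℓdef]
    constructor
    · nlinarith [hs.1, hs.2]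
    · nlinarith [hs.1, hs.2]
  refine ⟨fun s x => h' b (hinv' (ℓ s) (h (ℓ s) (hinv a x))), ?_, ?_, ?_, ?_, ?_⟩
  · -- continuity
    set S := Icc (0:ℝ) 1 ×ˢ Wa with hS
    have hcℓ : Continuous ℓ := by fun_prop
    -- step 1: q ↦ hinv a q.2 on S
    have hg2 : ContinuousOn (fun q : ℝ × M => hinv a q.2) S := by
      have : ContinuousOn ((fun p : ℝ × M => hinv p.1 p.2) ∘ (fun q : ℝ × M => ((a : ℝ), q.2))) S := by
        apply hic.comp (by fun_prop)
        intro q hq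
        exact (hWa q.2).mpr hq.2
      exact this
    have hg2mem : ∀ q ∈ S, hinv a q.2 ∈ Wa := by
      intro q hq
      exact (hinvW (a, q.2) ((hWa q.2).mpr hq.2)).2.1
    -- step 2: q ↦ h (ℓ q.1) (hinv a q.2)
    have hg4 : ContinuousOn (fun q : ℝ × M => h (ℓ q.1) (hinv a q.2)) S := by
      have : ContinuousOn ((fun p : ℝ × M => h p.1 p.2) ∘
          (fun q : ℝ × M => (ℓ q.1, hinv a q.2))) S := by
        apply hc.comp
        · exact ((hcℓ.comp continuous_fst).continuousOn).prodMk hg2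
        · intro q hq
          exact ⟨hℓI q.1 hq.1, hg2mem q hq⟩
      exact this
    have hg4mem : ∀ q ∈ S, (ℓ q.1, h (ℓ q.1) (hinv a q.2)) ∈ W := by
      intro q hq
      exact hmemW (ℓ q.1) (hℓI q.1 hq.1) _ (hg2mem q hq)
    -- step 3: q ↦ hinv' (ℓ q.1) (h (ℓ q.1) (hinv a q.2))
    have hg6 : ContinuousOn (fun q : ℝ × M => hinv' (ℓ q.1) (h (ℓ q.1) (hinv a q.2))) S := by
      have : ContinuousOn ((fun p : ℝ × M => hinv' p.1 p.2) ∘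
          (fun q : ℝ × M => (ℓ q.1, h (ℓ q.1) (hinv a q.2)))) S := by
        apply hic'.comp
        · exact ((hcℓ.comp continuous_fst).continuousOn).prodMk hg4
        · exact hg4mem
      exact this
    have hg6mem : ∀ q ∈ S, hinv' (ℓ q.1) (h (ℓ q.1) (hinv a q.2)) ∈ Wa := by
      intro q hq
      exact (hinvW' _ (hg4mem q hq)).2.1
    -- step 4: apply h' b
    have : ContinuousOn ((fun p : ℝ × M => h' p.1 p.2) ∘
        (fun q : ℝ × M => ((b : ℝ), hinv' (ℓ q.1) (h (ℓ q.1) (hinv a q.2))))) S := by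
      apply hc'.comp
      · exact continuousOn_const.prodMk hg6
      · intro q hq
        exact ⟨hbI, hg6mem q hq⟩
    exact this
  · -- H 0 = m
    intro x hx
    have hℓ0 : ℓ 0 = b := by simp [hℓdef]
    show h' b (hinv' (ℓ 0) (h (ℓ 0) (hinv a x))) = m x
    rw [hℓ0, hm x hx]
    have hmx : (b, m x) ∈ W := by
      rw [hm x hx]
      exact hmemW b hbI _ (hinvW (a, x) ((hWa x).mpr hx)).2.1
    have := (hinvW' (b, m x) hmx).2.2
    simp only at this
    rw [hm x hx] at this
    exact this
  · -- H 1 = m'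
    intro x hx
    have hℓ1 : ℓ 1 = a := by simp [hℓdef]
    show h' b (hinv' (ℓ 1) (h (ℓ 1) (hinv a x))) = m' x
    rw [hℓ1, hm' x hx]
    have := (hinvW (a, x) ((hWa x).mpr hx)).2.2
    simp only at this
    rw [this]
  · -- MapsTo Wa
    intro s hs x hx
    have h1 : hinv a x ∈ Wa := (hinvW (a, x) ((hWa x).mpr hx)).2.1
    have h2 : (ℓ s, h (ℓ s) (hinv a x)) ∈ W := hmemW _ (hℓI s hs) _ h1
    have h3 : hinv' (ℓ s) (h (ℓ s) (hinv a x)) ∈ Wa := (hinvW' _ h2).2.1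
    exact (hWb _).mp (hmemW' b hbI _ h3)
  · -- MapsTo Wamm
    intro s hs x hx
    have h1 : hinv a x ∈ Wamm := hinvWmm (a, x) ((hWamm x).mpr hx)
    have h2 : (ℓ s, h (ℓ s) (hinv a x)) ∈ Wmm := hmemWmm _ (hℓI s hs) _ h1
    have h3 : hinv' (ℓ s) (h (ℓ s) (hinv a x)) ∈ Wamm := hinvWmm' _ h2
    exact (hWbmm _).mp (hmemWmm' b hbI _ h3)
end
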